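/- Consider the stochastic linear program min_{θ∈[0,1]} E[zθ] where z is a real random variable with a strictly positive density everywhere, symmetric about its mean E[z] = 1, and let z_1,...,z_n be i.i.d. copies of z. Let θ̂ ∈ argmin_{θ∈[0,1]} ((1/n)Σ_{i=1}^n z_i)·θ be the SAA solution (so θ̂ = 1 whenever (1/n)Σ z_i < 0). Then for every δ ∈ (0,1), P(L(θ̂) > min_{θ∈[0,1]} L(θ) + δ) ≥ P(θ̂ = 1) ≥ (1/2)·P(z < 1−n), where L(θ) = E[zθ] = θ. -/

import Mathlib

set_option autoImplicit false

open MeasureTheory ProbabilityTheory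
open scoped ENNReal


lemma measurable_finset_sum' {Ω : Type*} [MeasurableSpace Ω] (s : Finset ℕ) (z : ℕ → Ω → ℝ)
    (h : ∀ i, Measurable (z i)) : Measurable (∑ i ∈ s, z i) := by
  rw [Finset.sum_fn]
  exact Finset.measurable_sum s fun i _ => h i

lemma map_finset_sum_eq_of_marginals {Ω : Type*} [MeasurableSpace Ω]
    (μ : Measure Ω) [IsProbabilityMeasure μ]
    (z w : ℕ → Ω → ℝ) (hzm : ∀ i, Measurable (z i)) (hwm : ∀ i, Measurable (w i))
    (hindz : iIndepFun z μ)
    (hindw : iIndepFun w μ)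
    (hmarg : ∀ i, μ.map (z i) = μ.map (w i)) :
    ∀ s : Finset ℕ, μ.map (∑ i ∈ s, z i) = μ.map (∑ i ∈ s, w i) := by
  intro s
  induction s using Finset.induction_on with
  | empty => simp
  | @insert j s hj ih =>
    have hSzm : Measurable (∑ i ∈ s, z i) := measurable_finset_sum' s z hzm
    have hSwm : Measurable (∑ i ∈ s, w i) := measurable_finset_sum' s w hwm
    have hz_ind : IndepFun (z j) (∑ i ∈ s, z i) μ :=
      (hindz.indepFun_finsetSum_of_notMem hzm hj).symm
    have hw_ind : IndepFun (w j) (∑ i ∈ s, w i) μ :=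
      (hindw.indepFun_finsetSum_of_notMem hwm hj).symm
    have hz_map := (indepFun_iff_map_prod_eq_prod_map_map (hzm j).aemeasurable
      hSzm.aemeasurable).1 hz_ind
    have hw_map := (indepFun_iff_map_prod_eq_prod_map_map (hwm j).aemeasurable
      hSwm.aemeasurable).1 hw_ind
    have key : ∀ (f S : Ω → ℝ), Measurable f → Measurable S →
        μ.map (f + S) = (μ.map (fun ω => (f ω, S ω))).map (fun p : ℝ × ℝ => p.1 + p.2) := by
      intro f S hf hS
      rw [Measure.map_map measurable_add (hf.prodMk hS)]
      rfl
    rw [Finset.sum_insert hj, Finset.sum_insert hj,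
      key _ _ (hzm j) hSzm, key _ _ (hwm j) hSwm, hz_map, hw_map, hmarg j, ih]

theorem saa_lp_polynomial_tail
    {Ω : Type*} [MeasurableSpace Ω] (μ : Measure Ω) [IsProbabilityMeasure μ]
    (ν : Measure ℝ) [IsProbabilityMeasure ν]
    (f : ℝ → ℝ) (hfpos : ∀ x, 0 < f x) (hfm : Measurable f)
    (hdens : ν = MeasureTheory.volume.withDensity (fun x => ENNReal.ofReal (f x)))
    (hmean : ∫ x, x ∂ν = 1)
    (hsymm : Measure.map (fun x => 2 - x) ν = ν)
    (z : ℕ → Ω → ℝ) (hzm : ∀ i, Measurable (z i))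
    (hindep : iIndepFun z μ)
    (hid : ∀ i, Measure.map (z i) μ = ν)
    (n : ℕ) (hn : 0 < n)
    (θhat : Ω → ℝ)
    (hθmem : ∀ ω, θhat ω ∈ Set.Icc (0 : ℝ) 1)
    (hargmin : ∀ ω, ∀ θ ∈ Set.Icc (0 : ℝ) 1,
      ((n : ℝ)⁻¹ * ∑ i ∈ Finset.range n, z i ω) * θhat ω ≤
        ((n : ℝ)⁻¹ * ∑ i ∈ Finset.range n, z i ω) * θ)
    (L : ℝ → ℝ) (hL : ∀ θ, L θ = ∫ x, x * θ ∂ν)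
    (δ : ℝ) (hδ : δ ∈ Set.Ioo (0 : ℝ) 1) :
    μ {ω | L (θhat ω) > (⨅ θ : Set.Icc (0 : ℝ) 1, L θ) + δ} ≥ μ {ω | θhat ω = 1} ∧
    μ {ω | θhat ω = 1} ≥ (1 / 2 : ℝ≥0∞) * ν (Set.Iio (1 - n)) := by
  obtain ⟨hδ0, hδ1⟩ := hδ
  have hLθ : ∀ θ : ℝ, L θ = θ := by
    intro θ
    rw [hL θ, integral_mul_const, hmean, one_mul]
  constructor
  · apply measure_mono
    intro ω hω
    simp only [Set.mem_setOf_eq] at hω ⊢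
    have hbdd : BddBelow (Set.range fun θ : Set.Icc (0:ℝ) 1 => L θ) := by
      refine ⟨0, ?_⟩
      rintro x ⟨θ, rfl⟩
      simpa [hLθ] using θ.2.1
    have hinf : (⨅ θ : Set.Icc (0:ℝ) 1, L θ) ≤ 0 := by
      have := ciInf_le hbdd (⟨0, by norm_num⟩ : Set.Icc (0:ℝ) 1)
      simpa [hLθ] using this
    rw [hω, hLθ]
    linarith
  · -- part 2
    set s : Finset ℕ := Finset.Ico 1 n with hs
    set T : Ω → ℝ := ∑ i ∈ s, z i with hT
    have hTω : ∀ ω, T ω = ∑ i ∈ s, z i ω := by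
      intro ω; rw [hT]; simp [Finset.sum_apply]
    have hTm : Measurable T := by
      rw [hT]; exact measurable_finset_sum' s z hzm
    -- the reflected variables
    set w : ℕ → Ω → ℝ := fun i => (fun x => 2 - x) ∘ z i with hw
    have hwm : ∀ i, Measurable (w i) :=
      fun i => (measurable_const.sub measurable_id).comp (hzm i)
    have hindw : iIndepFun w μ :=
      hindep.comp (fun _ x => 2 - x) (fun _ => measurable_const.sub measurable_id)
    have hmarg : ∀ i, μ.map (z i) = μ.map (w i) := by
      intro i
      rw [hw]
      simp only
      rw [← Measure.map_map (show Measurable fun x : ℝ => 2 - x from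
        measurable_const.sub measurable_id) (hzm i), hid i, hsymm]
    have hmapT := map_finset_sum_eq_of_marginals μ z w hzm hwm hindep hindw hmarg s
    -- the reflected sum
    have hcard : (s.card : ℝ) = (n : ℝ) - 1 := by
      rw [hs, Nat.card_Ico]
      have : (n - 1 : ℕ) = n - 1 := rfl
      push_cast [Nat.cast_sub hn]
      ring
    set c : ℝ := (n : ℝ) - 1 with hc
    have hwsum : ∀ ω, (∑ i ∈ s, w i) ω = 2 * c - T ω := by
      intro ω
      rw [hTω]
      simp only [Finset.sum_apply, hw, Function.comp_apply, Finset.sum_sub_distrib,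
        Finset.sum_const, nsmul_eq_mul]
      rw [← hcard]; ring
    -- half bound
    have hThalf : (1 / 2 : ℝ≥0∞) ≤ μ (T ⁻¹' Set.Iic c) := by
      have h1 : μ (T ⁻¹' Set.Iic c) = μ {ω | c ≤ T ω} := by
        have hm2 : Measurable (∑ i ∈ s, w i) := measurable_finset_sum' s w hwm
        have e1 : μ (T ⁻¹' Set.Iic c) = (μ.map T) (Set.Iic c) :=
          (Measure.map_apply hTm measurableSet_Iic).symm
        have e2 : (μ.map (∑ i ∈ s, w i)) (Set.Iic c) = μ ((∑ i ∈ s, w i) ⁻¹' Set.Iic c) :=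
          Measure.map_apply hm2 measurableSet_Iic
        rw [e1, hmapT, e2]
        congr 1
        ext ω
        simp only [Set.mem_preimage, Set.mem_Iic, Set.mem_setOf_eq, hwsum ω]
        constructor <;> intro h <;> linarith
      have h2 : (1 : ℝ≥0∞) ≤ μ (T ⁻¹' Set.Iic c) + μ {ω | c ≤ T ω} := by
        have : (Set.univ : Set Ω) ⊆ T ⁻¹' Set.Iic c ∪ {ω | c ≤ T ω} := by
          intro ω _
          rcases le_total (T ω) c with h | h
          · exact Or.inl h
          · exact Or.inr h
        calc (1 : ℝ≥0∞) = μ Set.univ := (measure_univ).symm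
          _ ≤ μ (T ⁻¹' Set.Iic c ∪ {ω | c ≤ T ω}) := measure_mono this
          _ ≤ _ := measure_union_le _ _
      rw [← h1] at h2
      have h3 : (1 : ℝ≥0∞) ≤ μ (T ⁻¹' Set.Iic c) * 2 := by
        rw [mul_two]; exact h2
      exact ENNReal.div_le_of_le_mul h3
    -- independence of z 0 and T
    have h0notmem : (0 : ℕ) ∉ s := by simp [hs]
    have hindT : IndepFun T (z 0) μ := by
      rw [hT]
      exact hindep.indepFun_finsetSum_of_notMem hzm h0notmem
    set A : Set Ω := z 0 ⁻¹' Set.Iio (1 - (n : ℝ)) with hA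
    set B : Set Ω := T ⁻¹' Set.Iic c with hB
    have hAB : μ (A ∩ B) = μ A * μ B := by
      refine hindT.symm.meas_inter ⟨Set.Iio (1 - (n : ℝ)), measurableSet_Iio, rfl⟩
        ⟨Set.Iic c, measurableSet_Iic, rfl⟩
    have hμA : μ A = ν (Set.Iio (1 - (n : ℝ))) := by
      rw [hA, ← hid 0, Measure.map_apply (hzm 0) measurableSet_Iio]
    -- on A ∩ B, θhat = 1
    have hsub : A ∩ B ⊆ {ω | θhat ω = 1} := by
      rintro ω ⟨hωA, hωB⟩
      simp only [hA, Set.mem_preimage, Set.mem_Iio] at hωA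
      simp only [hB, Set.mem_preimage, Set.mem_Iic] at hωB
      have hsumsplit : ∑ i ∈ Finset.range n, z i ω = z 0 ω + T ω := by
        rw [hTω, hs]
        exact Finset.sum_range_eq_add_Ico (fun i => z i ω) hn
      have hSneg : ∑ i ∈ Finset.range n, z i ω < 0 := by
        rw [hsumsplit, hc] at *
        linarith
      have hmneg : (n : ℝ)⁻¹ * ∑ i ∈ Finset.range n, z i ω < 0 := by
        have : (0 : ℝ) < (n : ℝ)⁻¹ := by positivity
        exact mul_neg_of_pos_of_neg this hSneg
      have harg := hargmin ω 1 ⟨zero_le_one, le_refl 1⟩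
      rw [mul_one] at harg
      have h1le : 1 ≤ θhat ω := by
        nlinarith [(hθmem ω).2]
      exact le_antisymm (hθmem ω).2 h1le
    calc μ {ω | θhat ω = 1} ≥ μ (A ∩ B) := measure_mono hsub
      _ = μ A * μ B := hAB
      _ ≥ μ A * (1 / 2 : ℝ≥0∞) := mul_le_mul_right hThalf _
      _ = (1 / 2 : ℝ≥0∞) * ν (Set.Iio (1 - (n : ℝ))) := by rw [hμA, mul_comm]
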